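/- Let X be a subshift over a finite alphabet Λ, let ε > 0, and let B₁, …, B_m ∈ B*(X) be blocks such that for every j = 1, …, m there exists a measure μ_j ∈ M(X) with d*(B_j, μ_j) < ε. Then d*(B, μ) < 2ε, where B = B₁B₂⋯B_m is the concatenation of the blocks B₁, …, B_m and μ = Σ_{j=1}^m (|B_j|/|B|) μ_j. -/

import Mathlib

open MeasureTheory
open scoped ENNReal

/-- The left shift on `ℤ → Λ`: `(shiftZ x) i = x (i+1)`. -/
def shiftZ {Λ : Type*} (x : ℤ → Λ) : ℤ → Λ := fun i => x (i + 1)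

/-- The block `x|_{[i, i+k)}` of length `k`. -/
def blockAt {Λ : Type*} (x : ℤ → Λ) (i : ℤ) (k : ℕ) : List Λ :=
  List.ofFn fun j : Fin k => x (i + j.val)

/-- The frequency of occurrences of the block `C` in the block `B`. -/
noncomputable def Freq {Λ : Type*} (B C : List Λ) : ℝ :=
  (({i : ℕ | i + C.length ≤ B.length ∧
      ∀ j : Fin C.length, B[i + (j : ℕ)]? = C[(j : ℕ)]?}).ncard : ℝ) / (B.length : ℝ)

/-- The set `B*(X)` of (nonempty) finite blocks occurring in elements of `X`. -/
def BlocksOf {Λ : Type*} (X : Set (ℤ → Λ)) : Set (List Λ) :=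
  {B | B ≠ [] ∧ ∃ x ∈ X, ∃ i : ℤ, blockAt x i B.length = B}

/-- A subshift: a nonempty, closed, shift-invariant subset of `Λ^ℤ`. -/
def IsSubshift {Λ : Type*} [TopologicalSpace Λ] (X : Set (ℤ → Λ)) : Prop :=
  X.Nonempty ∧ IsClosed X ∧ shiftZ '' X = X

/-- The cylinder set associated with a block `C`. -/
def cyl {Λ : Type*} (C : List Λ) : Set (ℤ → Λ) :=
  {x | ∀ j : Fin C.length, x ((j : ℕ) : ℤ) = C.get j}

/-- `M(X)`: Borel probability measures carried by `X`. -/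
def MeasOf {Λ : Type*} [MeasurableSpace Λ] (X : Set (ℤ → Λ)) :
    Set (Measure (ℤ → Λ)) :=
  {μ | IsProbabilityMeasure μ ∧ μ X = 1}

/-- `M_σ(X)`: shift-invariant measures in `M(X)`. -/
def InvMeasOf {Λ : Type*} [MeasurableSpace Λ] (X : Set (ℤ → Λ)) :
    Set (Measure (ℤ → Λ)) :=
  {μ | μ ∈ MeasOf X ∧ Measure.map shiftZ μ = μ}

/-- `M_σ^erg(X)`: ergodic measures in `M_σ(X)`. -/
def ErgMeasOf {Λ : Type*} [MeasurableSpace Λ] (X : Set (ℤ → Λ)) :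
    Set (Measure (ℤ → Λ)) :=
  {μ | μ ∈ InvMeasOf X ∧ Ergodic shiftZ μ}

/-- An element of the combined space of blocks and measures. -/
abbrev Obj (Λ : Type*) [MeasurableSpace Λ] := List Λ ⊕ Measure (ℤ → Λ)

/-- The valuation of an object (block or measure) on a block `C`:
frequency for blocks, measure of the cylinder for measures. -/
noncomputable def objVal {Λ : Type*} [MeasurableSpace Λ] : Obj Λ → List Λ → ℝ
  | Sum.inl B => fun C => Freq B C
  | Sum.inr μ => fun C => (μ (cyl C)).toReal

/-- The metric `d*` on the combined space of blocks and measures. -/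
noncomputable def dStar {Λ : Type*} [Fintype Λ] [MeasurableSpace Λ]
    (ω₁ ω₂ : Obj Λ) : ℝ :=
  ∑' l : ℕ, (2 : ℝ) ^ (-(l : ℤ) - 1) *
    ∑ C : Fin (l + 1) → Λ, |objVal ω₁ (List.ofFn C) - objVal ω₂ (List.ofFn C)|



section Aux
variable {Λ : Type*}

open Classical in
/-- The occurrence finset of `C` in `B`. -/
noncomputable def occF (B C : List Λ) : Finset ℕ :=
  (Finset.range (B.length + 1 - C.length)).filter fun i => ∀ j < C.length, B[i + j]? = C[j]?

lemma mem_occF {B C : List Λ} {i : ℕ} :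
    i ∈ occF B C ↔ i + C.length ≤ B.length ∧ ∀ j < C.length, B[i + j]? = C[j]? := by
  classical
  simp only [occF, Finset.mem_filter, Finset.mem_range]
  constructor
  · rintro ⟨h1, h2⟩; exact ⟨by omega, h2⟩
  · rintro ⟨h1, h2⟩; exact ⟨by omega, h2⟩

lemma Freq_eq (B C : List Λ) : Freq B C = ((occF B C).card : ℝ) / B.length := by
  have hset : {i : ℕ | i + C.length ≤ B.length ∧
      ∀ j : Fin C.length, B[i + (j : ℕ)]? = C[(j : ℕ)]?} = ↑(occF B C) := by
    ext i
    simp only [Set.mem_setOf_eq, Finset.mem_coe, mem_occF]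
    exact and_congr_right fun _ =>
      ⟨fun h j hj => h ⟨j, hj⟩, fun h j => h j j.2⟩
  rw [Freq, hset, Set.ncard_coe_finset]

lemma sum_card_occF [Fintype Λ] (B : List Λ) (n : ℕ) :
    ∑ C : Fin n → Λ, ((occF B (List.ofFn C)).card) = B.length + 1 - n := by
  classical
  have hstep : ∀ C : Fin n → Λ, (occF B (List.ofFn C)).card =
      ∑ i ∈ Finset.range (B.length + 1 - n),
        if (∀ j < n, B[i + j]? = (List.ofFn C)[j]?) then 1 else 0 := by
    intro C
    rw [occF]
    simp only [List.length_ofFn]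
    rw [Finset.card_filter]
  rw [Finset.sum_congr rfl fun C _ => hstep C, Finset.sum_comm]
  have hinner : ∀ i ∈ Finset.range (B.length + 1 - n),
      (∑ C : Fin n → Λ, if (∀ j < n, B[i + j]? = (List.ofFn C)[j]?) then 1 else 0) = 1 := by
    intro i hi
    rw [Finset.mem_range] at hi
    have hin : i + n ≤ B.length := by omega
    set C₀ : Fin n → Λ := fun j => B[i + (j : ℕ)]'(by omega) with hC₀
    rw [Finset.sum_eq_single C₀]
    · rw [if_pos]
      intro j hj
      rw [List.getElem?_eq_getElem (by omega), List.getElem?_ofFn]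
      simp only [List.ofFnNthVal, hj, dif_pos]
      rfl
    · intro b _ hb
      rw [if_neg]
      intro hmatch
      apply hb
      funext j
      have := hmatch j j.2
      rw [List.getElem?_eq_getElem (by omega), List.getElem?_ofFn] at this
      simp only [List.ofFnNthVal, j.2, dif_pos] at this
      have := Option.some_injective _ this
      rw [hC₀]
      simp [← this]
    · intro h; exact absurd (Finset.mem_univ _) h
  rw [Finset.sum_congr rfl hinner]
  simp

/-- decomposition of flatten around index `j` -/
lemma flatten_decomp (L : List (List Λ)) (j : ℕ) (hj : j < L.length) :
    L.flatten = (L.take j).flatten ++ (L[j] ++ (L.drop (j + 1)).flatten) := by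
  conv_lhs => rw [← List.take_append_drop j L]
  rw [List.flatten_append, List.drop_eq_getElem_cons hj, List.flatten_cons]

/-- offset of block `j` in the flattening -/
def off (L : List (List Λ)) (j : ℕ) : ℕ := ((L.take j).flatten).length

lemma off_succ (L : List (List Λ)) (j : ℕ) (hj : j < L.length) :
    off L (j + 1) = off L j + L[j].length := by
  unfold off
  rw [List.take_succ, List.getElem?_eq_getElem hj, List.flatten_append, List.length_append]
  simp [List.flatten_cons]

lemma off_mono (L : List (List Λ)) {a b : ℕ} (h : a ≤ b) : off L a ≤ off L b := by
  induction b with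
  | zero => have : a = 0 := by omega
            subst this; exact le_refl _
  | succ b ih =>
    rcases Nat.lt_or_ge a (b + 1) with h' | h'
    · rcases Nat.lt_or_ge b L.length with hb | hb
      · have := off_succ L b hb
        have := ih (by omega)
        omega
      · have : L.take (b + 1) = L.take b := by
          rw [List.take_of_length_le (by omega), List.take_of_length_le hb]
        unfold off
        rw [this]
        exact ih (by omega)
    · have : a = b + 1 := by omega
      rw [this]

lemma off_add_le (L : List (List Λ)) (j : ℕ) (hj : j < L.length) :
    off L j + L[j].length ≤ L.flatten.length := by
  rw [← off_succ L j hj]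
  have h1 : off L (j+1) ≤ off L L.length := off_mono L (by omega)
  have h2 : off L L.length = L.flatten.length := by
    unfold off; rw [List.take_of_length_le (le_refl _)]
  omega

lemma occF_flatten_mem (L : List (List Λ)) (C : List Λ) (j : ℕ) (hj : j < L.length)
    {i : ℕ} (hi : i ∈ occF L[j] C) : off L j + i ∈ occF L.flatten C := by
  rw [mem_occF] at hi ⊢
  obtain ⟨hlen, hmatch⟩ := hi
  constructor
  · have := off_add_le L j hj
    omega
  · intro t ht
    rw [flatten_decomp L j hj]
    rw [List.getElem?_append_right (by unfold off; omega)]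
    have : off L j + i + t - ((L.take j).flatten).length = i + t := by unfold off; omega
    rw [this, List.getElem?_append_left (by omega)]
    exact hmatch t ht

lemma sum_card_occF_le [Fintype Λ] (m : ℕ) (Bs : Fin m → List Λ) (C : List Λ)
    (hC : C ≠ []) :
    ∑ j : Fin m, (occF (Bs j) C).card ≤ (occF (List.ofFn Bs).flatten C).card := by
  classical
  set L := List.ofFn Bs with hL
  have hLlen : L.length = m := by simp [hL]
  have hLget : ∀ j : Fin m, L[(j : ℕ)]'(by omega) = Bs j := by
    intro j; simp [hL]
  have hClen : 0 < C.length := List.length_pos_iff.2 hC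
  set g : Fin m → Finset ℕ := fun j => (occF (Bs j) C).image (off L j + ·) with hg
  have hcard : ∀ j, (g j).card = (occF (Bs j) C).card := by
    intro j
    exact Finset.card_image_of_injective _ (add_right_injective _)
  -- bound of elements of g j
  have hbound : ∀ (j : Fin m) (x : ℕ), x ∈ g j → off L j ≤ x ∧ x < off L ((j : ℕ) + 1) := by
    intro j x hx
    rw [hg, Finset.mem_image] at hx
    obtain ⟨i, hi, rfl⟩ := hx
    rw [mem_occF] at hi
    have h1 : i + C.length ≤ (Bs j).length := hi.1
    have hoff : off L ((j:ℕ) + 1) = off L j + (Bs j).length := by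
      rw [off_succ L j (by omega)]
      congr 1
      rw [hLget j]
    constructor
    · omega
    · omega
  have hdisj : ∀ x ∈ Finset.univ, ∀ y ∈ Finset.univ, x ≠ y → Disjoint (g x) (g y) := by
    intro a _ b _ hab
    rw [Finset.disjoint_left]
    intro x hxa hxb
    have ha := hbound a x hxa
    have hb := hbound b x hxb
    rcases Nat.lt_or_ge (a : ℕ) (b : ℕ) with h | h
    · have := off_mono L (show (a:ℕ) + 1 ≤ (b:ℕ) by omega)
      omega
    · have h' : (b : ℕ) < (a : ℕ) := by
        rcases Nat.lt_or_ge (b:ℕ) (a:ℕ) with h'' | h''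
        · exact h''
        · exact absurd (Fin.ext (by omega)) hab
      have := off_mono L (show (b:ℕ) + 1 ≤ (a:ℕ) by omega)
      omega
  calc ∑ j : Fin m, (occF (Bs j) C).card = ∑ j : Fin m, (g j).card := by
        refine Finset.sum_congr rfl fun j _ => (hcard j).symm
    _ = (Finset.univ.biUnion g).card := (Finset.card_biUnion hdisj).symm
    _ ≤ (occF L.flatten C).card := by
        apply Finset.card_le_card
        intro x hx
        rw [Finset.mem_biUnion] at hx
        obtain ⟨j, _, hxj⟩ := hx
        rw [hg, Finset.mem_image] at hxj
        obtain ⟨i, hi, rfl⟩ := hxj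
        refine occF_flatten_mem L C j (by omega) ?_
        simpa [hL] using hi

end Aux

section MeasAux
variable {Λ : Type*} [Fintype Λ] [TopologicalSpace Λ] [DiscreteTopology Λ]
  [MeasurableSpace Λ] [BorelSpace Λ]

lemma cyl_ofFn_eq (n : ℕ) (C : Fin n → Λ) :
    cyl (List.ofFn C) = (fun (x : ℤ → Λ) (j : Fin n) => x ((j : ℕ) : ℤ)) ⁻¹' {C} := by
  ext x
  simp only [cyl, Set.mem_setOf_eq, Set.mem_preimage, Set.mem_singleton_iff, funext_iff]
  constructor
  · intro h j
    have := h (Fin.cast (List.length_ofFn : (List.ofFn C).length = n).symm j)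
    rw [List.get_ofFn] at this
    simpa using this
  · intro h j
    rw [List.get_ofFn]
    have := h (Fin.cast (List.length_ofFn : (List.ofFn C).length = n) j)
    simpa using this

lemma sum_measure_cyl (μ : Measure (ℤ → Λ)) [IsProbabilityMeasure μ] (n : ℕ) :
    ∑ C : Fin n → Λ, μ (cyl (List.ofFn C)) = 1 := by
  classical
  set f : (ℤ → Λ) → (Fin n → Λ) := fun x j => x ((j : ℕ) : ℤ) with hf
  have hmeas : ∀ C : Fin n → Λ, MeasurableSet (cyl (List.ofFn C)) := by
    intro C
    rw [cyl_ofFn_eq]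
    have hfm : Measurable f := by
      apply measurable_pi_lambda
      intro j
      exact measurable_pi_apply _
    apply hfm
    have : ({C} : Set (Fin n → Λ)) = ⋂ j : Fin n, (fun g : Fin n → Λ => g j) ⁻¹' {C j} := by
      ext g; simp [funext_iff]
    rw [this]
    exact MeasurableSet.iInter fun j =>
      (measurable_pi_apply j) ((isOpen_discrete _).measurableSet : MeasurableSet {C j})
  have hdisj : Pairwise (Function.onFun Disjoint fun C : Fin n → Λ => cyl (List.ofFn C)) := by
    intro C C' hCC'
    rw [Function.onFun, cyl_ofFn_eq, cyl_ofFn_eq]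
    exact Disjoint.preimage _ (by simpa using hCC')
  have hcover : (⋃ C : Fin n → Λ, cyl (List.ofFn C)) = Set.univ := by
    ext x
    simp only [Set.mem_iUnion, Set.mem_univ, iff_true]
    exact ⟨f x, by rw [cyl_ofFn_eq]; rfl⟩
  have := measure_iUnion (μ := μ) hdisj hmeas
  rw [hcover, measure_univ, tsum_fintype] at this
  exact this.symm
end MeasAux

section MoreAux
variable {Λ : Type*} [Fintype Λ] [TopologicalSpace Λ] [DiscreteTopology Λ]
  [MeasurableSpace Λ] [BorelSpace Λ]

lemma Freq_nonneg (B C : List Λ) : 0 ≤ Freq B C := by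
  rw [Freq_eq]; positivity

lemma sum_Freq (D : List Λ) (n : ℕ) :
    ∑ C : Fin n → Λ, Freq D (List.ofFn C) = ((D.length + 1 - n : ℕ) : ℝ) / D.length := by
  rw [Finset.sum_congr rfl fun C _ => Freq_eq D (List.ofFn C), ← Finset.sum_div,
    ← Nat.cast_sum, sum_card_occF]

lemma sum_Freq_le_one (D : List Λ) (l : ℕ) :
    ∑ C : Fin (l + 1) → Λ, Freq D (List.ofFn C) ≤ 1 := by
  rw [sum_Freq]
  rcases Nat.eq_zero_or_pos D.length with h | h
  · simp [h]
  · rw [div_le_one (by exact_mod_cast h)]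
    exact_mod_cast Nat.sub_le_of_le_add (by omega)

lemma sum_toReal_cyl (μ : Measure (ℤ → Λ)) [IsProbabilityMeasure μ] (n : ℕ) :
    ∑ C : Fin n → Λ, (μ (cyl (List.ofFn C))).toReal = 1 := by
  rw [← ENNReal.toReal_sum (fun C _ => measure_ne_top μ _), sum_measure_cyl,
    ENNReal.toReal_one]

lemma S_le_two (D : List Λ) (l : ℕ) (M : (Fin (l + 1) → Λ) → ℝ)
    (hM0 : ∀ C, 0 ≤ M C) (hM1 : ∑ C, M C = 1) :
    ∑ C : Fin (l + 1) → Λ, |Freq D (List.ofFn C) - M C| ≤ 2 := by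
  calc ∑ C : Fin (l + 1) → Λ, |Freq D (List.ofFn C) - M C|
      ≤ ∑ C : Fin (l + 1) → Λ, (Freq D (List.ofFn C) + M C) := by
        refine Finset.sum_le_sum fun C _ => ?_
        calc |Freq D (List.ofFn C) - M C| ≤ |Freq D (List.ofFn C)| + |M C| := abs_sub _ _
          _ = Freq D (List.ofFn C) + M C := by
              rw [abs_of_nonneg (Freq_nonneg _ _), abs_of_nonneg (hM0 C)]
    _ = (∑ C : Fin (l + 1) → Λ, Freq D (List.ofFn C)) + ∑ C, M C := Finset.sum_add_distrib
    _ ≤ 1 + 1 := by rw [hM1]; exact add_le_add_left (sum_Freq_le_one D l) 1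
    _ = 2 := by norm_num

lemma gap_le_S (D : List Λ) (l : ℕ) (M : (Fin (l + 1) → Λ) → ℝ)
    (hM1 : ∑ C, M C = 1) :
    1 - ((D.length + 1 - (l + 1) : ℕ) : ℝ) / D.length
      ≤ ∑ C : Fin (l + 1) → Λ, |Freq D (List.ofFn C) - M C| := by
  calc 1 - ((D.length + 1 - (l + 1) : ℕ) : ℝ) / D.length
      = ∑ C : Fin (l + 1) → Λ, (M C - Freq D (List.ofFn C)) := by
        rw [Finset.sum_sub_distrib, hM1, sum_Freq]
    _ ≤ ∑ C : Fin (l + 1) → Λ, |Freq D (List.ofFn C) - M C| := by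
        refine Finset.sum_le_sum fun C _ => ?_
        rw [abs_sub_comm]
        exact le_abs_self _

lemma pow_aux (l : ℕ) : (2 : ℝ) ^ (-(l : ℤ) - 1) = (1 / 2) * (1 / 2) ^ l := by
  rw [zpow_sub₀ (by norm_num : (2 : ℝ) ≠ 0), zpow_neg, zpow_natCast, zpow_one,
    div_eq_mul_inv, one_div, inv_pow]
  ring

lemma summable_aux {S : ℕ → ℝ} (c : ℝ) (h0 : ∀ l, 0 ≤ S l) (h2 : ∀ l, S l ≤ c) :
    Summable fun l : ℕ => (2 : ℝ) ^ (-(l : ℤ) - 1) * S l := by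
  have hgeom : Summable fun l : ℕ => (2 : ℝ) ^ (-(l : ℤ) - 1) * c := by
    simp only [pow_aux]
    exact ((summable_geometric_of_lt_one (by norm_num) (by norm_num)).mul_left
      (1 / 2)).mul_right c
  refine Summable.of_nonneg_of_le (fun l => mul_nonneg (by positivity) (h0 l)) (fun l => ?_) hgeom
  exact mul_le_mul_of_nonneg_left (h2 l) (by positivity)

end MoreAux

theorem dStar_concatenation
    {Λ : Type*} [Fintype Λ] [TopologicalSpace Λ] [DiscreteTopology Λ]
    [MeasurableSpace Λ] [BorelSpace Λ]
    (X : Set (ℤ → Λ)) (hX : IsSubshift X) (ε : ℝ) (hε : 0 < ε)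
    (m : ℕ) (Bs : Fin m → List Λ) (μs : Fin m → Measure (ℤ → Λ))
    (hBs : ∀ j, Bs j ∈ BlocksOf X) (hμs : ∀ j, μs j ∈ MeasOf X)
    (hclose : ∀ j, dStar (Sum.inl (Bs j)) (Sum.inr (μs j)) < ε) :
    dStar (Sum.inl (List.ofFn Bs).flatten)
      (Sum.inr (∑ j : Fin m,
        (((Bs j).length : ℝ≥0∞) / ((List.ofFn Bs).flatten.length : ℝ≥0∞)) • μs j)) < 2 * ε := by
  classical
  rcases Nat.eq_zero_or_pos m with rfl | hm
  · -- degenerate case m = 0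
    have h0 : dStar (Sum.inl ((List.ofFn Bs).flatten : List Λ))
        (Sum.inr (∑ j : Fin 0,
          (((Bs j).length : ℝ≥0∞) / ((List.ofFn Bs).flatten.length : ℝ≥0∞)) • μs j)) = 0 := by
      have hB0 : (List.ofFn Bs).flatten = ([] : List Λ) := by simp
      rw [hB0]
      simp only [dStar, objVal, Finset.univ_eq_empty, Finset.sum_empty]
      have hz : ∀ l : ℕ, ∑ C : Fin (l + 1) → Λ,
          |Freq ([] : List Λ) (List.ofFn C) - (((0 : Measure (ℤ → Λ))) (cyl (List.ofFn C))).toReal| = 0 := by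
        intro l
        refine Finset.sum_eq_zero fun C _ => ?_
        rw [Freq_eq]
        simp
      simp only [hz, mul_zero]
      exact tsum_zero
    rw [h0]
    linarith
  · -- main case
    haveI : Nonempty (Fin m) := Fin.pos_iff_nonempty.1 hm
    set B : List Λ := (List.ofFn Bs).flatten with hB
    set K : ℕ := B.length with hKdef
    set μt : Measure (ℤ → Λ) :=
      ∑ j : Fin m, (((Bs j).length : ℝ≥0∞) / (K : ℝ≥0∞)) • μs j with hμtdef
    have hkpos : ∀ j, 0 < (Bs j).length :=
      fun j => List.length_pos_iff.2 (hBs j).1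
    have hKsum : K = ∑ j : Fin m, (Bs j).length := by
      rw [hKdef, hB, List.length_flatten, List.map_ofFn, List.sum_ofFn]
      rfl
    have hKpos : 0 < K := by
      rw [hKsum]
      exact Finset.sum_pos (fun j _ => hkpos j) Finset.univ_nonempty
    have hKR : (0 : ℝ) < (K : ℝ) := by exact_mod_cast hKpos
    set w : Fin m → ℝ := fun j => ((Bs j).length : ℝ) / K with hwdef
    have hw_pos : ∀ j, 0 < w j := fun j => by
      rw [hwdef]
      exact div_pos (by exact_mod_cast hkpos j) hKR
    have hw_nonneg : ∀ j, 0 ≤ w j := fun j => (hw_pos j).le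
    have hw_sum : ∑ j, w j = 1 := by
      rw [hwdef, ← Finset.sum_div, ← Nat.cast_sum, ← hKsum, div_self hKR.ne']
    -- decomposition of the combined measure on any set
    have hμt : ∀ s : Set (ℤ → Λ),
        (μt s).toReal = ∑ j, w j * ((μs j) s).toReal := by
      intro s
      have happly : μt s = ∑ j, (((Bs j).length : ℝ≥0∞) / (K : ℝ≥0∞)) * (μs j) s := by
        rw [hμtdef, Measure.coe_finset_sum, Finset.sum_apply]
        refine Finset.sum_congr rfl fun j _ => ?_
        rw [Measure.smul_apply, smul_eq_mul]
      rw [happly, ENNReal.toReal_sum]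
      · refine Finset.sum_congr rfl fun j _ => ?_
        haveI := (hμs j).1
        rw [ENNReal.toReal_mul, ENNReal.toReal_div, hwdef]
        simp
      · intro j _
        haveI := (hμs j).1
        refine ENNReal.mul_ne_top ?_ (measure_ne_top _ _)
        exact (ENNReal.div_lt_top (ENNReal.natCast_ne_top _)
          (by exact_mod_cast hKpos.ne')).ne
    -- abbreviations
    set A : Fin m → ℕ → ℝ := fun j l => ∑ C : Fin (l + 1) → Λ,
      |Freq (Bs j) (List.ofFn C) - ((μs j) (cyl (List.ofFn C))).toReal| with hAdef
    set T : ℕ → ℝ := fun l => ∑ C : Fin (l + 1) → Λ,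
      |Freq B (List.ofFn C) - (μt (cyl (List.ofFn C))).toReal| with hTdef
    have hA_nonneg : ∀ j l, 0 ≤ A j l := fun j l =>
      Finset.sum_nonneg fun C _ => abs_nonneg _
    have hA_le2 : ∀ j l, A j l ≤ 2 := by
      intro j l
      haveI := (hμs j).1
      exact S_le_two (Bs j) l _ (fun C => ENNReal.toReal_nonneg)
        (sum_toReal_cyl (μs j) (l + 1))
    have hμt_sum : ∀ n : ℕ, ∑ C : Fin n → Λ, (μt (cyl (List.ofFn C))).toReal = 1 := by
      intro n
      rw [Finset.sum_congr rfl fun C _ => hμt (cyl (List.ofFn C)), Finset.sum_comm]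
      rw [Finset.sum_congr rfl fun j (_ : j ∈ Finset.univ) => (Finset.mul_sum _ _ _).symm]
      haveI : ∀ j : Fin m, IsProbabilityMeasure (μs j) := fun j => (hμs j).1
      rw [Finset.sum_congr rfl fun j _ => by rw [sum_toReal_cyl (μs j) n, mul_one]]
      exact hw_sum
    have hT_nonneg : ∀ l, 0 ≤ T l := fun l =>
      Finset.sum_nonneg fun C _ => abs_nonneg _
    have hT_le2 : ∀ l, T l ≤ 2 := fun l =>
      S_le_two B l _ (fun C => ENNReal.toReal_nonneg) (hμt_sum (l + 1))
    -- the key estimate for each length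
    have hkey : ∀ l : ℕ, T l ≤ ∑ j, w j * (2 * A j l) := by
      intro l
      set n : ℕ := l + 1 with hn
      have hCne : ∀ C : Fin n → Λ, List.ofFn C ≠ [] := by
        intro C h
        have := congrArg List.length h
        simp [hn] at this
      -- step 1 : superadditivity of counts
      have hwF : ∀ (C : Fin n → Λ) (j : Fin m), w j * Freq (Bs j) (List.ofFn C)
          = ((occF (Bs j) (List.ofFn C)).card : ℝ) / K := by
        intro C j
        rw [hwdef, Freq_eq]
        have h0 : ((Bs j).length : ℝ) ≠ 0 := by
          exact_mod_cast (hkpos j).ne'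
        field_simp
      have hsplit : ∀ C : Fin n → Λ,
          ∑ j, w j * Freq (Bs j) (List.ofFn C) ≤ Freq B (List.ofFn C) := by
        intro C
        rw [Finset.sum_congr rfl fun j _ => hwF C j, Freq_eq, ← Finset.sum_div, ← hKdef]
        rw [div_le_div_iff_of_pos_right hKR]
        exact_mod_cast sum_card_occF_le m Bs (List.ofFn C) (hCne C)
      -- step 2 : pointwise triangle estimate
      have hper : ∀ C : Fin n → Λ,
          |Freq B (List.ofFn C) - (μt (cyl (List.ofFn C))).toReal|
            ≤ (Freq B (List.ofFn C) - ∑ j, w j * Freq (Bs j) (List.ofFn C))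
              + ∑ j, w j * |Freq (Bs j) (List.ofFn C) - ((μs j) (cyl (List.ofFn C))).toReal| := by
        intro C
        rw [hμt (cyl (List.ofFn C))]
        refine (abs_sub_le _ (∑ j, w j * Freq (Bs j) (List.ofFn C)) _).trans ?_
        refine add_le_add (le_of_eq (abs_of_nonneg (sub_nonneg.2 (hsplit C)))) ?_
        rw [← Finset.sum_sub_distrib]
        refine (Finset.abs_sum_le_sum_abs _ _).trans ?_
        refine Finset.sum_le_sum fun j _ => ?_
        rw [← mul_sub, abs_mul, abs_of_nonneg (hw_nonneg j)]
      -- step 3 : sum over C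
      have hswap : ∑ C : Fin n → Λ, ∑ j, w j *
            |Freq (Bs j) (List.ofFn C) - ((μs j) (cyl (List.ofFn C))).toReal|
          = ∑ j, w j * A j l := by
        rw [Finset.sum_comm]
        exact Finset.sum_congr rfl fun j _ => (Finset.mul_sum _ _ _).symm
      have hTle : T l ≤ (∑ C : Fin n → Λ,
            (Freq B (List.ofFn C) - ∑ j, w j * Freq (Bs j) (List.ofFn C)))
          + ∑ j, w j * A j l := by
        rw [hTdef]
        refine (Finset.sum_le_sum fun C _ => hper C).trans ?_
        rw [Finset.sum_add_distrib, hswap]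
      -- step 4 : the leading term is bounded by the gaps
      have hfirst : (∑ C : Fin n → Λ,
            (Freq B (List.ofFn C) - ∑ j, w j * Freq (Bs j) (List.ofFn C)))
          ≤ ∑ j, w j * A j l := by
        have hBsum : ∑ C : Fin n → Λ, Freq B (List.ofFn C)
            = ((K + 1 - n : ℕ) : ℝ) / K := by
          rw [sum_Freq, hKdef]
        have hjsum : ∀ j : Fin m, ∑ C : Fin n → Λ, w j * Freq (Bs j) (List.ofFn C)
            = (((Bs j).length + 1 - n : ℕ) : ℝ) / K := by
          intro j
          rw [← Finset.mul_sum, sum_Freq, hwdef]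
          have h0 : ((Bs j).length : ℝ) ≠ 0 := by exact_mod_cast (hkpos j).ne'
          field_simp
        have hLHS : (∑ C : Fin n → Λ,
              (Freq B (List.ofFn C) - ∑ j, w j * Freq (Bs j) (List.ofFn C)))
            = ((K + 1 - n : ℕ) : ℝ) / K - ∑ j, (((Bs j).length + 1 - n : ℕ) : ℝ) / K := by
          rw [Finset.sum_sub_distrib, hBsum, Finset.sum_comm,
            Finset.sum_congr rfl fun j _ => hjsum j]
        have hgapA : ∀ j : Fin m,
            w j * (1 - (((Bs j).length + 1 - n : ℕ) : ℝ) / (Bs j).length)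
              ≤ w j * A j l := by
          intro j
          refine mul_le_mul_of_nonneg_left ?_ (hw_nonneg j)
          haveI := (hμs j).1
          rw [hAdef, hn]
          exact gap_le_S (Bs j) l _ (sum_toReal_cyl (μs j) (l + 1))
        have hgapval : ∀ j : Fin m,
            w j * (1 - (((Bs j).length + 1 - n : ℕ) : ℝ) / (Bs j).length)
              = w j - (((Bs j).length + 1 - n : ℕ) : ℝ) / K := by
          intro j
          rw [hwdef]
          have h0 : ((Bs j).length : ℝ) ≠ 0 := by exact_mod_cast (hkpos j).ne'
          field_simp
        have hKle : ((K + 1 - n : ℕ) : ℝ) / K ≤ 1 := by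
          rw [div_le_one hKR]
          exact_mod_cast Nat.sub_le_of_le_add (by omega)
        calc (∑ C : Fin n → Λ,
              (Freq B (List.ofFn C) - ∑ j, w j * Freq (Bs j) (List.ofFn C)))
            = ((K + 1 - n : ℕ) : ℝ) / K
                - ∑ j, (((Bs j).length + 1 - n : ℕ) : ℝ) / K := hLHS
          _ ≤ 1 - ∑ j, (((Bs j).length + 1 - n : ℕ) : ℝ) / K := by linarith
          _ = ∑ j, (w j - (((Bs j).length + 1 - n : ℕ) : ℝ) / K) := by
              rw [Finset.sum_sub_distrib, hw_sum]
          _ = ∑ j, w j * (1 - (((Bs j).length + 1 - n : ℕ) : ℝ) / (Bs j).length) := by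
              exact Finset.sum_congr rfl fun j _ => (hgapval j).symm
          _ ≤ ∑ j, w j * A j l := Finset.sum_le_sum fun j _ => hgapA j
      calc T l ≤ (∑ C : Fin n → Λ,
            (Freq B (List.ofFn C) - ∑ j, w j * Freq (Bs j) (List.ofFn C)))
          + ∑ j, w j * A j l := hTle
        _ ≤ (∑ j, w j * A j l) + ∑ j, w j * A j l := add_le_add_left hfirst _
        _ = ∑ j, w j * (2 * A j l) := by
            rw [← Finset.sum_add_distrib]
            exact Finset.sum_congr rfl fun j _ => by ring
    -- identification of the distances
    have hdB : dStar (Sum.inl B) (Sum.inr μt)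
        = ∑' l : ℕ, (2 : ℝ) ^ (-(l : ℤ) - 1) * T l := by
      simp only [dStar, objVal, hTdef]
    have hdj : ∀ j, dStar (Sum.inl (Bs j)) (Sum.inr (μs j))
        = ∑' l : ℕ, (2 : ℝ) ^ (-(l : ℤ) - 1) * A j l := by
      intro j
      simp only [dStar, objVal, hAdef]
    -- summability
    have hsumT : Summable fun l : ℕ => (2 : ℝ) ^ (-(l : ℤ) - 1) * T l :=
      summable_aux 2 hT_nonneg hT_le2
    have hsumA : ∀ j, Summable fun l : ℕ => (2 : ℝ) ^ (-(l : ℤ) - 1) * A j l :=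
      fun j => summable_aux 2 (hA_nonneg j) (hA_le2 j)
    have hw_le1 : ∀ j, w j ≤ 1 := by
      intro j
      rw [hwdef, div_le_one hKR]
      exact_mod_cast by
        rw [hKsum]
        exact Finset.single_le_sum (fun i (_ : i ∈ Finset.univ) =>
          Nat.zero_le ((Bs i).length)) (Finset.mem_univ j)
    have hsumRHSj : ∀ j : Fin m, Summable fun l : ℕ =>
        (2 : ℝ) ^ (-(l : ℤ) - 1) * (w j * (2 * A j l)) := by
      intro j
      refine summable_aux 4 (fun l => by positivity) fun l => ?_
      calc w j * (2 * A j l) ≤ 1 * (2 * 2) :=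
            mul_le_mul (hw_le1 j) (by linarith [hA_le2 j l])
              (by positivity) zero_le_one
        _ = 4 := by norm_num
    have hsumRHS : Summable fun l : ℕ =>
        (2 : ℝ) ^ (-(l : ℤ) - 1) * ∑ j, w j * (2 * A j l) := by
      refine summable_aux (4 * m) (fun l => by positivity) fun l => ?_
      calc ∑ j, w j * (2 * A j l) ≤ ∑ _j : Fin m, (4 : ℝ) := by
            refine Finset.sum_le_sum fun j _ => ?_
            calc w j * (2 * A j l) ≤ 1 * (2 * 2) :=
                  mul_le_mul (hw_le1 j) (by linarith [hA_le2 j l])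
                    (by positivity) zero_le_one
              _ = 4 := by norm_num
        _ = 4 * m := by simp [mul_comm]
    -- putting everything together
    rw [hdB]
    calc ∑' l : ℕ, (2 : ℝ) ^ (-(l : ℤ) - 1) * T l
        ≤ ∑' l : ℕ, (2 : ℝ) ^ (-(l : ℤ) - 1) * ∑ j, w j * (2 * A j l) := by
          refine Summable.tsum_le_tsum (fun l => ?_) hsumT hsumRHS
          exact mul_le_mul_of_nonneg_left (hkey l) (by positivity)
      _ = ∑' l : ℕ, ∑ j, (2 : ℝ) ^ (-(l : ℤ) - 1) * (w j * (2 * A j l)) := by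
          exact tsum_congr fun l => by rw [Finset.mul_sum]
      _ = ∑ j, ∑' l : ℕ, (2 : ℝ) ^ (-(l : ℤ) - 1) * (w j * (2 * A j l)) :=
          Summable.tsum_finsetSum fun j _ => hsumRHSj j
      _ = ∑ j, (w j * 2) * ∑' l : ℕ, (2 : ℝ) ^ (-(l : ℤ) - 1) * A j l := by
          refine Finset.sum_congr rfl fun j _ => ?_
          rw [← tsum_mul_left]
          exact tsum_congr fun l => by ring
      _ < ∑ j, (w j * 2) * ε := by
          refine Finset.sum_lt_sum_of_nonempty Finset.univ_nonempty fun j _ => ?_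
          refine mul_lt_mul_of_pos_left ?_ (by linarith [hw_pos j])
          rw [← hdj j]
          exact hclose j
      _ = 2 * ε := by
          rw [← Finset.sum_mul, ← Finset.sum_mul, hw_sum]
          ring
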